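/- Fix p ∈ [1,∞) and m, n ∈ ℕ. Let (X,d_X) be a metric space and let A be an n×n symmetric stochastic matrix. Then γ(A, d_X^p) ≤ M_p(X;m)^p · m · γ(A^m, d_X^p). -/

import Mathlib

open scoped ENNReal

/-- An `n × n` real matrix is symmetric and stochastic. -/
def IsSymmStochastic {n : ℕ} (A : Matrix (Fin n) (Fin n) ℝ) : Prop :=
  (∀ i j, A i j = A j i) ∧ (∀ i j, 0 ≤ A i j) ∧ ∀ i, ∑ j, A i j = 1

/-- The nonlinear spectral gap quantity `γ(A, d_X^p)`. -/
noncomputable def gammaNL {n : ℕ} (A : Matrix (Fin n) (Fin n) ℝ)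
    (X : Type*) [PseudoMetricSpace X] (p : ℝ) : ℝ≥0∞ :=
  sInf {g : ℝ≥0∞ | 0 < g ∧ ∀ x : Fin n → X,
    ENNReal.ofReal ((∑ i, ∑ j, dist (x i) (x j) ^ p) / (n : ℝ) ^ 2) ≤
      g / (n : ℝ≥0∞) * ENNReal.ofReal (∑ i, ∑ j, A i j * dist (x i) (x j) ^ p)}

/-- The Markov type `p` constant of `X` at time `m`, `M_p(X;m)`: the infimum over those
`M ∈ (0,∞]` such that for every `n`, every `x₁,…,xₙ ∈ X` and every `n × n` symmetric
stochastic `A`, `∑ᵢ∑ⱼ (A^m)ᵢⱼ d(xᵢ,xⱼ)^p ≤ M^p·m·∑ᵢ∑ⱼ aᵢⱼ d(xᵢ,xⱼ)^p`. -/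
noncomputable def markovTypeConst (X : Type*) [PseudoMetricSpace X] (p : ℝ) (m : ℕ) :
    ℝ≥0∞ :=
  sInf {M : ℝ≥0∞ | 0 < M ∧ ∀ (n : ℕ) (A : Matrix (Fin n) (Fin n) ℝ),
    IsSymmStochastic A → ∀ x : Fin n → X,
      ENNReal.ofReal (∑ i, ∑ j, (A ^ m) i j * dist (x i) (x j) ^ p) ≤
        M ^ p * (m : ℝ≥0∞) * ENNReal.ofReal (∑ i, ∑ j, A i j * dist (x i) (x j) ^ p)}

/-- **Lemma.** Fix `p ∈ [1,∞)` and `m, n ∈ ℕ`.  For every metric space `X` and every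
`n × n` symmetric stochastic matrix `A`,
`γ(A,d_X^p) ≤ M_p(X;m)^p · m · γ(A^m, d_X^p)`. -/
theorem gamma_le_markov_type_gamma_pow (p : ℝ) (hp : 1 ≤ p) (m : ℕ) (hm : 0 < m) {n : ℕ}
    (X : Type*) [MetricSpace X]
    (A : Matrix (Fin n) (Fin n) ℝ) (hA : IsSymmStochastic A) :
    gammaNL A X p ≤ markovTypeConst X p m ^ p * (m : ℝ≥0∞) * gammaNL (A ^ m) X p := by
  classical
  have hp0 : (0:ℝ) < p := lt_of_lt_of_le one_pos hp
  by_cases hdeg : ∀ x : Fin n → X,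
      ENNReal.ofReal ((∑ i, ∑ j, dist (x i) (x j) ^ p) / (n : ℝ) ^ 2) = 0
  · -- degenerate case: the left-hand quantity is always zero, so `gammaNL A X p = 0`.
    have h0 : gammaNL A X p ≤ 0 := by
      refine ENNReal.le_of_forall_pos_le_add fun ε hε _ => ?_
      have : gammaNL A X p ≤ (ε : ℝ≥0∞) := by
        refine sInf_le ⟨by exact_mod_cast hε, fun x => ?_⟩
        rw [hdeg x]
        exact zero_le
      simpa using this
    exact h0.trans zero_le
  · push_neg at hdeg
    obtain ⟨x₀, hx₀⟩ := hdeg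
    have hL₀ : 0 < ENNReal.ofReal ((∑ i, ∑ j, dist (x₀ i) (x₀ j) ^ p) / (n : ℝ) ^ 2) :=
      pos_iff_ne_zero.mpr hx₀
    -- there are two points at positive distance
    have hterm : ∃ i j, 0 < dist (x₀ i) (x₀ j) := by
      by_contra hc
      push_neg at hc
      have hz : (∑ i, ∑ j, dist (x₀ i) (x₀ j) ^ p) = 0 := by
        refine Finset.sum_eq_zero fun i _ => Finset.sum_eq_zero fun j _ => ?_
        have : dist (x₀ i) (x₀ j) = 0 := le_antisymm (hc i j) dist_nonneg
        rw [this, Real.zero_rpow hp0.ne']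
      rw [hz] at hL₀
      simp at hL₀
    obtain ⟨i₀, j₀, hij⟩ := hterm
    have hn : 0 < n := i₀.pos
    have hn0 : (n : ℝ≥0∞) ≠ 0 := Nat.cast_ne_zero.mpr hn.ne'
    have hnt : (n : ℝ≥0∞) ≠ ⊤ := ENNReal.natCast_ne_top n
    have hm0 : (m : ℝ≥0∞) ≠ 0 := Nat.cast_ne_zero.mpr hm.ne'
    have hmt : (m : ℝ≥0∞) ≠ ⊤ := ENNReal.natCast_ne_top m
    -- the Markov type constant is bounded below by a positive constant
    have hTlb : ((m : ℝ≥0∞))⁻¹ ^ (1 / p) ≤ markovTypeConst X p m := by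
      refine le_sInf fun M hM => ?_
      obtain ⟨hM0, hMineq⟩ := hM
      set B : Matrix (Fin 2) (Fin 2) ℝ := fun _ _ => (1/2 : ℝ) with hB
      have hBs : IsSymmStochastic B :=
        ⟨fun _ _ => rfl, fun _ _ => by norm_num [hB], fun i => by
          norm_num [hB, Fin.sum_univ_two]⟩
      have hBB : B * B = B := by
        ext i j
        rw [Matrix.mul_apply]
        norm_num [hB, Matrix.mul_apply, Fin.sum_univ_two]
      have hBpow : ∀ k : ℕ, B ^ (k + 1) = B := by
        intro k
        induction k with
        | zero => rw [pow_one]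
        | succ k ih => rw [pow_succ, ih, hBB]
      have hBm : B ^ m = B := by
        obtain ⟨k, hk⟩ := Nat.exists_eq_succ_of_ne_zero hm.ne'
        rw [hk]; exact hBpow k
      set a := x₀ i₀
      set b := x₀ j₀
      set x2 : Fin 2 → X := ![a, b] with hx2
      have hsum2 : (∑ i, ∑ j, B i j * dist (x2 i) (x2 j) ^ p) = dist a b ^ p := by
        simp [hB, hx2, Fin.sum_univ_two, dist_self, Real.zero_rpow hp0.ne', dist_comm b a]
        ring
      have hkey := hMineq 2 B hBs x2
      rw [hBm, hsum2] at hkey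
      have hdp : (ENNReal.ofReal (dist a b ^ p)) ≠ 0 := by
        simpa using (ENNReal.ofReal_pos.mpr (Real.rpow_pos_of_pos hij p)).ne'
      have h1 : 1 ≤ M ^ p * (m : ℝ≥0∞) :=
        (ENNReal.mul_le_mul_iff_left hdp ENNReal.ofReal_ne_top).mp (by rw [one_mul]; exact hkey)
      have h2 : ((m : ℝ≥0∞))⁻¹ ≤ M ^ p := by
        rw [← one_div]
        exact (ENNReal.div_le_iff_le_mul (Or.inl hm0) (Or.inl hmt)).mpr h1
      calc ((m : ℝ≥0∞))⁻¹ ^ (1 / p) ≤ (M ^ p) ^ (1 / p) :=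
            ENNReal.rpow_le_rpow h2 (by positivity)
        _ = M := by rw [one_div, ENNReal.rpow_rpow_inv hp0.ne']
    have hT0 : markovTypeConst X p m ≠ 0 :=
      (lt_of_lt_of_le (ENNReal.rpow_pos
        (pos_iff_ne_zero.mpr (ENNReal.inv_ne_zero.mpr hmt))
        (ENNReal.inv_ne_top.mpr hm0)) hTlb).ne'
    -- the gamma of A^m is bounded below by a positive constant
    set L₀ : ℝ≥0∞ :=
      ENNReal.ofReal ((∑ i, ∑ j, dist (x₀ i) (x₀ j) ^ p) / (n : ℝ) ^ 2) with hL₀def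
    set E₀ : ℝ≥0∞ :=
      ENNReal.ofReal (∑ i, ∑ j, (A ^ m) i j * dist (x₀ i) (x₀ j) ^ p) with hE₀def
    set c₀ : ℝ≥0∞ := L₀ * n / E₀ with hc₀def
    have hc₀pos : 0 < c₀ :=
      ENNReal.div_pos (ENNReal.mul_pos hx₀ hn0).ne' ENNReal.ofReal_ne_top
    have hS'lb : c₀ ≤ gammaNL (A ^ m) X p := by
      refine le_sInf fun g hg => ?_
      obtain ⟨hg0, hgineq⟩ := hg
      have h := hgineq x₀
      by_cases hE : E₀ = 0
      · rw [← hE₀def] at h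
        rw [hE, mul_zero] at h
        exact absurd (le_antisymm h zero_le) hx₀
      · have hEt : E₀ ≠ ⊤ := ENNReal.ofReal_ne_top
        rw [← hE₀def, ← hL₀def] at h
        calc c₀ ≤ (g / n * E₀) * n / E₀ := by
              rw [hc₀def]
              exact ENNReal.div_le_div_right (mul_le_mul_left h _) _
          _ = g * ((n : ℝ≥0∞)⁻¹ * n) * (E₀ * E₀⁻¹) := by
              rw [div_eq_mul_inv, div_eq_mul_inv]; ring
          _ = g := by
              rw [ENNReal.inv_mul_cancel hn0 hnt, ENNReal.mul_inv_cancel hE hEt,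
                mul_one, mul_one]
    have hS'0 : gammaNL (A ^ m) X p ≠ 0 := (lt_of_lt_of_le hc₀pos hS'lb).ne'
    -- key: for all t, s strictly above the respective infima
    have hkey : ∀ t s : ℝ≥0∞, markovTypeConst X p m < t → gammaNL (A ^ m) X p < s →
        gammaNL A X p ≤ t ^ p * (m : ℝ≥0∞) * s := by
      intro t s ht hs
      rw [markovTypeConst] at ht
      rw [gammaNL] at hs
      obtain ⟨M, hM, hMt⟩ := sInf_lt_iff.mp ht
      obtain ⟨g, hg, hgs⟩ := sInf_lt_iff.mp hs
      obtain ⟨hM0, hMineq⟩ := hM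
      obtain ⟨hg0, hgineq⟩ := hg
      have hMp0 : M ^ p ≠ 0 := by
        simp [ENNReal.rpow_eq_zero_iff, hM0.ne', not_lt.mpr hp0.le]
      have hmem : gammaNL A X p ≤ M ^ p * (m : ℝ≥0∞) * g := by
        refine sInf_le ⟨ENNReal.mul_pos (ENNReal.mul_pos hMp0 hm0).ne' hg0.ne', fun x => ?_⟩
        calc ENNReal.ofReal ((∑ i, ∑ j, dist (x i) (x j) ^ p) / (n : ℝ) ^ 2)
            ≤ g / (n : ℝ≥0∞) *
              ENNReal.ofReal (∑ i, ∑ j, (A ^ m) i j * dist (x i) (x j) ^ p) := hgineq x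
          _ ≤ g / (n : ℝ≥0∞) * (M ^ p * (m : ℝ≥0∞) *
              ENNReal.ofReal (∑ i, ∑ j, A i j * dist (x i) (x j) ^ p)) :=
              mul_le_mul_right (hMineq n A hA x) _
          _ = M ^ p * (m : ℝ≥0∞) * g / (n : ℝ≥0∞) *
              ENNReal.ofReal (∑ i, ∑ j, A i j * dist (x i) (x j) ^ p) := by
              rw [div_eq_mul_inv, div_eq_mul_inv]; ring
      refine hmem.trans ?_
      exact mul_le_mul' (mul_le_mul' (ENNReal.rpow_le_rpow hMt.le hp0.le) le_rfl) hgs.le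
    by_cases hTt : markovTypeConst X p m = ⊤
    · rw [hTt, ENNReal.top_rpow_of_pos hp0, ENNReal.top_mul hm0, ENNReal.top_mul hS'0]
      exact le_top
    by_cases hSt : gammaNL (A ^ m) X p = ⊤
    · rw [hSt, ENNReal.mul_top (ENNReal.mul_pos
        (by simp [ENNReal.rpow_eq_zero_iff, hT0, not_lt.mpr hp0.le]) hm0).ne']
      exact le_top
    · have h1 : Filter.Tendsto (fun k : ℕ => markovTypeConst X p m + (k : ℝ≥0∞)⁻¹)
          Filter.atTop (nhds (markovTypeConst X p m)) := by
        simpa using Filter.Tendsto.add (tendsto_const_nhds)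
          ENNReal.tendsto_inv_nat_nhds_zero
      have h2 : Filter.Tendsto (fun k : ℕ => gammaNL (A ^ m) X p + (k : ℝ≥0∞)⁻¹)
          Filter.atTop (nhds (gammaNL (A ^ m) X p)) := by
        simpa using Filter.Tendsto.add (tendsto_const_nhds)
          ENNReal.tendsto_inv_nat_nhds_zero
      have h1p : Filter.Tendsto (fun k : ℕ => (markovTypeConst X p m + (k : ℝ≥0∞)⁻¹) ^ p)
          Filter.atTop (nhds (markovTypeConst X p m ^ p)) :=
        (ENNReal.continuous_rpow_const.tendsto _).comp h1
      have h3 := ENNReal.Tendsto.mul_const (b := (m : ℝ≥0∞)) h1p (Or.inr hmt)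
      have hTp0 : markovTypeConst X p m ^ p ≠ 0 := by
        simp [ENNReal.rpow_eq_zero_iff, hT0, not_lt.mpr hp0.le]
      have hlim := ENNReal.Tendsto.mul h3 (Or.inl (ENNReal.mul_pos hTp0 hm0).ne') h2
        (Or.inl hS'0)
      refine ge_of_tendsto hlim ?_
      filter_upwards [Filter.eventually_gt_atTop 0] with k hk
      have hki : ((k : ℝ≥0∞))⁻¹ ≠ 0 := ENNReal.inv_ne_zero.mpr (ENNReal.natCast_ne_top k)
      exact hkey _ _ (ENNReal.lt_add_right hTt hki) (ENNReal.lt_add_right hSt hki)
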